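/- Let p, q be coprime positive integers and set θ = q(α − p/q), and suppose 0 < θ < 1/q. Then each interval [j/q, (j+1)/q), 0 ≤ j ≤ q−1, contains exactly one point of the form {kα} with 0 ≤ k ≤ q−1, where {·} denotes fractional part. -/

import Mathlib

theorem stmt3 (α : ℝ) (p q : ℕ) (hp : 0 < p) (hq : 0 < q) (hcop : Nat.Coprime p q)
    (θ : ℝ) (hθ : θ = (q : ℝ) * (α - (p : ℝ) / (q : ℝ)))
    (hθpos : 0 < θ) (hθlt : θ < 1 / (q : ℝ)) :
    ∀ j : ℕ, j ≤ q - 1 →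
      ∃! k : ℕ, k ≤ q - 1 ∧
        Int.fract ((k : ℝ) * α) ∈ Set.Ico ((j : ℝ) / (q : ℝ)) (((j : ℝ) + 1) / (q : ℝ)) := by
  haveI : NeZero q := ⟨hq.ne'⟩
  have hqR : (0:ℝ) < (q:ℝ) := by exact_mod_cast hq
  have hα : α = (p:ℝ)/q + θ/q := by
    field_simp at hθ ⊢
    linarith
  have hθq : θ * (q:ℝ) < 1 := (lt_div_iff₀ hqR).mp hθlt
  have hkθ1 : ∀ k : ℕ, k < q → (k:ℝ)*θ < 1 := by
    intro k hk
    have hkR : (k:ℝ) ≤ (q:ℝ) - 1 := by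
      have : (k:ℝ) + 1 ≤ (q:ℝ) := by exact_mod_cast hk
      linarith
    nlinarith [mul_nonneg (by linarith : (0:ℝ) ≤ (q:ℝ) - 1 - (k:ℝ)) hθpos.le]
  intro j hj
  have hjq : j < q := by omega
  -- key computation
  have key : ∀ k : ℕ, k < q →
      Int.fract ((k:ℝ)*α) = (((k*p % q : ℕ):ℝ) + (k:ℝ)*θ)/q := by
    intro k hk
    have hkθ0 : 0 ≤ (k:ℝ)*θ := by positivity
    have hmod := Nat.div_add_mod (k*p) q
    have hcast : ((k:ℝ)*(p:ℝ)) = (q:ℝ) * ((k*p/q : ℕ):ℝ) + ((k*p % q : ℕ):ℝ) := by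
      exact_mod_cast congrArg (fun n : ℕ => (n:ℝ)) hmod.symm
    have hdecomp : (k:ℝ)*α = ((k*p/q : ℕ):ℝ) + (((k*p % q : ℕ):ℝ) + (k:ℝ)*θ)/q := by
      rw [hα]
      field_simp
      nlinarith [hcast]
    rw [hdecomp, Int.fract_natCast_add, Int.fract_eq_self.mpr]
    constructor
    · positivity
    · have hrlt : k*p % q < q := Nat.mod_lt _ hq
      have hr : ((k*p % q : ℕ):ℝ) + 1 ≤ (q:ℝ) := by exact_mod_cast hrlt
      rw [div_lt_one hqR]
      have := hkθ1 k hk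
      linarith
  -- membership iff residue equals j
  have mem_iff : ∀ k : ℕ, k < q →
      (Int.fract ((k:ℝ)*α) ∈ Set.Ico ((j : ℝ) / (q : ℝ)) (((j : ℝ) + 1) / (q : ℝ)) ↔
        k*p % q = j) := by
    intro k hk
    rw [key k hk]
    have hkθ0 : 0 ≤ (k:ℝ)*θ := by positivity
    have hkθ1' := hkθ1 k hk
    constructor
    · rintro ⟨h1, h2⟩
      rw [div_le_div_iff_of_pos_right hqR] at h1
      rw [div_lt_div_iff_of_pos_right hqR] at h2
      have hr1 : ((k*p % q : ℕ):ℝ) < (j:ℝ) + 1 := by linarith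
      have hr2 : (j:ℝ) < ((k*p % q : ℕ):ℝ) + 1 := by linarith
      have e1 : k*p % q < j + 1 := by exact_mod_cast hr1
      have e2 : j < k*p % q + 1 := by exact_mod_cast hr2
      omega
    · intro h
      subst h
      constructor
      · exact (div_le_div_iff_of_pos_right hqR).mpr (by linarith)
      · exact (div_lt_div_iff_of_pos_right hqR).mpr (by linarith)
  -- the witness
  let u : (ZMod q)ˣ := ZMod.unitOfCoprime p hcop
  let k0 : ℕ := ((((u⁻¹ : (ZMod q)ˣ) : ZMod q)) * (j : ZMod q)).val
  have hk0lt : k0 < q := ZMod.val_lt _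
  have hk0cast : ((k0 : ℕ) : ZMod q) = ((u⁻¹ : (ZMod q)ˣ) : ZMod q) * (j : ZMod q) := by
    rw [show k0 = ((((u⁻¹ : (ZMod q)ˣ) : ZMod q)) * (j : ZMod q)).val from rfl,
      ZMod.natCast_val, ZMod.cast_id]
  have hk0mod : k0 * p % q = j := by
    have hup : ((u : ZMod q)) = (p : ZMod q) := ZMod.coe_unitOfCoprime p hcop
    have hc : ((k0 * p : ℕ) : ZMod q) = ((j : ℕ) : ZMod q) := by
      push_cast
      rw [hk0cast, ← hup, mul_assoc, mul_comm ((j:ℕ) : ZMod q) ((u : ZMod q)),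
        ← mul_assoc, Units.inv_mul, one_mul]
    have hmodeq : k0 * p ≡ j [MOD q] := (ZMod.natCast_eq_natCast_iff _ _ _).mp hc
    have h2 : k0 * p % q = j % q := hmodeq
    rwa [Nat.mod_eq_of_lt hjq] at h2
  refine ⟨k0, ⟨by omega, (mem_iff k0 hk0lt).mpr hk0mod⟩, ?_⟩
  rintro k ⟨hkle, hkmem⟩
  have hklt : k < q := by omega
  have hkmod : k * p % q = j := (mem_iff k hklt).mp hkmem
  have hmodeq : k * p ≡ k0 * p [MOD q] := by unfold Nat.ModEq; omega
  have hcan : k ≡ k0 [MOD q] :=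
    hmodeq.cancel_right_of_coprime (by simpa [Nat.Coprime, Nat.gcd_comm] using hcop)
  have h3 : k % q = k0 % q := hcan
  rwa [Nat.mod_eq_of_lt hklt, Nat.mod_eq_of_lt hk0lt] at h3
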